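/- For 0 < p ≤ 1/2 and 1/2 ≤ s ≤ 1, one has H(s) + D(1-s‖p) ≤ H(s) + D(s‖p) when s ≥ 1-p, and H(s) + D(1-s‖p) ≤ 2·H(p) + D(1-p‖p) - H(s) when 1/2 ≤ s ≤ 1-p. That is, the lower bound rate for the online-attack average guesswork never exceeds the upper bound rate. -/

import Mathlib

open Real Set

/-- Binary Shannon entropy (base 2), with the convention 0 · log 0 = 0. -/
noncomputable def H (q : ℝ) : ℝ := -(q * Real.logb 2 q) - (1 - q) * Real.logb 2 (1 - q)

/-- Binary Kullback–Leibler divergence (base 2), with the convention 0 · log 0 = 0. -/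
noncomputable def D (q p : ℝ) : ℝ :=
  q * Real.logb 2 (q / p) + (1 - q) * Real.logb 2 ((1 - q) / (1 - p))

lemma D_nonneg (q p : ℝ) (hq : 0 < q) (hq1 : q < 1) (hp : 0 < p) (hp1 : p < 1) :
    0 ≤ D q p := by
  have hq' : (0:ℝ) < 1 - q := by linarith
  have hp' : (0:ℝ) < 1 - p := by linarith
  have h2 : (0:ℝ) < Real.log 2 := Real.log_pos (by norm_num)
  have hA : Real.log (p / q) ≤ p / q - 1 := Real.log_le_sub_one_of_pos (by positivity)
  have hB : Real.log ((1 - p) / (1 - q)) ≤ (1 - p) / (1 - q) - 1 :=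
    Real.log_le_sub_one_of_pos (by positivity)
  have hA' : q * Real.log (p / q) ≤ p - q := by
    have := mul_le_mul_of_nonneg_left hA hq.le
    have hqq : q * (p / q - 1) = p - q := by field_simp
    linarith [hqq ▸ this]
  have hB' : (1 - q) * Real.log ((1 - p) / (1 - q)) ≤ q - p := by
    have := mul_le_mul_of_nonneg_left hB hq'.le
    have hqq : (1 - q) * ((1 - p) / (1 - q) - 1) = q - p := by field_simp; ring
    linarith [hqq ▸ this]
  have e1 : Real.log (q / p) = -Real.log (p / q) := by
    rw [Real.log_div hq.ne' hp.ne', Real.log_div hp.ne' hq.ne']; ring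
  have e2 : Real.log ((1 - q) / (1 - p)) = -Real.log ((1 - p) / (1 - q)) := by
    rw [Real.log_div hq'.ne' hp'.ne', Real.log_div hp'.ne' hq'.ne']; ring
  have key : 0 ≤ q * Real.log (q / p) + (1 - q) * Real.log ((1 - q) / (1 - p)) := by
    rw [e1, e2]; nlinarith
  unfold D Real.logb
  have : q * (Real.log (q / p) / Real.log 2) + (1 - q) * (Real.log ((1 - q) / (1 - p)) / Real.log 2)
      = (q * Real.log (q / p) + (1 - q) * Real.log ((1 - q) / (1 - p))) / Real.log 2 := by ring
  rw [this]
  positivity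

theorem stmt_17 (p s : ℝ) (hp : 0 < p) (hp2 : p ≤ 1/2) (hs : 1/2 ≤ s) (hs1 : s ≤ 1) :
    (1 - p ≤ s → H s + D (1 - s) p ≤ H s + D s p) ∧
    (s ≤ 1 - p → H s + D (1 - s) p ≤ 2 * H p + D (1 - p) p - H s) := by
  have hp1 : p < 1 := by linarith
  have hp' : (0:ℝ) < 1 - p := by linarith
  have hlogp : Real.logb 2 p ≤ Real.logb 2 (1 - p) :=
    Real.logb_le_logb_of_le (by norm_num) hp (by linarith)
  constructor
  · intro _
    have hsuff : D (1 - s) p ≤ D s p := by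
      rcases eq_or_lt_of_le hs1 with rfl | hs1'
      · simp only [D]
        norm_num
        exact hlogp
      · have hs0 : (0:ℝ) < s := by linarith
        have hs' : (0:ℝ) < 1 - s := by linarith
        unfold D
        rw [show (1 : ℝ) - (1 - s) = s by ring]
        rw [Real.logb_div hs0.ne' hp.ne', Real.logb_div hs0.ne' hp'.ne',
            Real.logb_div hs'.ne' hp.ne', Real.logb_div hs'.ne' hp'.ne']
        nlinarith [hlogp]
    linarith
  · intro hsp
    have hs0 : (0:ℝ) < s := by linarith
    have hs' : (0:ℝ) < 1 - s := by linarith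
    have hD : 0 ≤ D s p := D_nonneg s p hs0 (by linarith) hp hp1
    have key : 2 * H p + D (1 - p) p - H s - (H s + D (1 - s) p) = D s p := by
      unfold H D
      rw [show (1 : ℝ) - (1 - s) = s by ring, show (1 : ℝ) - (1 - p) = p by ring]
      rw [Real.logb_div hs0.ne' hp.ne', Real.logb_div hs0.ne' hp'.ne',
          Real.logb_div hs'.ne' hp.ne', Real.logb_div hs'.ne' hp'.ne',
          Real.logb_div hp.ne' hp'.ne', Real.logb_div hp'.ne' hp.ne']
      ring
    linarith
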